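/- (Theorem 2, loss convergence — vanishing of the Categorical Discriminant Risk.) Let 0 < β ≤ 1 and c ≥ 1. For probability vectors u, v in ℝ^c (nonnegative entries summing to 1) define KL(u,v) = Σ_k u_k·log(u_k/v_k) (with the convention 0·log 0 = 0), w = (u+v)/2, and JS(u,v) = (1/2)(KL(u,w) + KL(v,w)). Let m_1 be a probability vector and let (y_t)_{t≥2} be probability vectors with y_t = y for all t ≥ k, where y has strictly positive entries. Define m_t = (1−β)·m_{t−1} + β·y_t for t ≥ 2. Then JS(m_t, y_t) → 0 as t → ∞. -/
import Mathlib


open Filter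

/-- A probability vector in `ℝ^c`: nonnegative entries summing to 1. -/
def IsProbVec {c : ℕ} (u : Fin c → ℝ) : Prop :=
  (∀ k, 0 ≤ u k) ∧ ∑ k, u k = 1

/-- Kullback–Leibler divergence between probability vectors (with the convention
`0 · log 0 = 0`, which holds automatically since `0 * x = 0` in `ℝ`). -/
noncomputable def KLvec {c : ℕ} (u v : Fin c → ℝ) : ℝ :=
  ∑ k, u k * Real.log (u k / v k)

/-- Jensen–Shannon divergence between probability vectors. -/
noncomputable def JSvec {c : ℕ} (u v : Fin c → ℝ) : ℝ :=
  (1 / 2) * (KLvec u (fun k => (u k + v k) / 2) + KLvec v (fun k => (u k + v k) / 2))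

lemma JSvec_self {c : ℕ} (y : Fin c → ℝ) (hypos : ∀ k, 0 < y k) : JSvec y y = 0 := by
  have : ∀ j : Fin c, y j / ((y j + y j) / 2) = 1 := fun j => by
    rw [show (y j + y j) / 2 = y j by ring, div_self (hypos j).ne']
  have h2 : ∀ j : Fin c, y j / y j = 1 := fun j => div_self (hypos j).ne'
  simp [JSvec, KLvec, this, h2]

lemma JSvec_contAt {c : ℕ} (y : Fin c → ℝ) (hypos : ∀ k, 0 < y k) :
    ContinuousAt (fun u : Fin c → ℝ => JSvec u y) y := by
  unfold JSvec KLvec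
  apply ContinuousAt.mul continuousAt_const
  have hd : ∀ j : Fin c, ContinuousAt (fun u : Fin c → ℝ => (u j + y j) / 2) y :=
    fun j => (((continuous_apply j).continuousAt).add continuousAt_const).div_const 2
  have hdne : ∀ j : Fin c, (y j + y j) / 2 ≠ 0 := fun j => by
    have := hypos j; positivity
  apply ContinuousAt.add
  · exact tendsto_finset_sum _ fun j _ => by
      refine ((continuous_apply j).continuousAt).mul ?_
      refine (Real.continuousAt_log ?_).comp (((continuous_apply j).continuousAt).div (hd j) (hdne j))
      exact div_ne_zero (hypos j).ne' (hdne j)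
  · exact tendsto_finset_sum _ fun j _ => by
      refine continuousAt_const.mul ?_
      refine (Real.continuousAt_log ?_).comp (continuousAt_const.div (hd j) (hdne j))
      exact div_ne_zero (hypos j).ne' (hdne j)

/-- Theorem 2 (loss convergence, vanishing of the Categorical Discriminant Risk):
if the batch-average predictions are eventually the constant probability vector `y`
with strictly positive entries, then the CDR penalty `JS(m_t, y_t)` tends to `0`. -/
theorem cdr_tendsto_zero {c : ℕ} (hc : 1 ≤ c)
    (β : ℝ) (hβ0 : 0 < β) (hβ1 : β ≤ 1)
    (m y' : ℕ → Fin c → ℝ) (y : Fin c → ℝ)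
    (hm1 : IsProbVec (m 1)) (hy' : ∀ t, 2 ≤ t → IsProbVec (y' t))
    (hypos : ∀ k, 0 < y k)
    (k : ℕ) (hy : ∀ t, k ≤ t → y' t = y)
    (hrec : ∀ t, 2 ≤ t → m t = (1 - β) • m (t - 1) + β • y' t) :
    Tendsto (fun t => JSvec (m t) (y' t)) atTop (nhds 0) := by
  set N := max k 2 with hN
  have hN2 : 2 ≤ N := le_max_right _ _
  have hNk : k ≤ N := le_max_left _ _
  have hstep : ∀ n, m (N + n) = y + (1 - β) ^ n • (m N - y) := by
    intro n
    induction n with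
    | zero => funext j; simp
    | succ n ih =>
      have h2 : 2 ≤ N + (n + 1) := by omega
      have := hrec (N + (n + 1)) h2
      rw [show N + (n + 1) - 1 = N + n by omega, ih, hy (N + (n + 1)) (by omega)] at this
      rw [this]; funext j
      simp only [Pi.add_apply, Pi.smul_apply, Pi.sub_apply, smul_eq_mul]
      ring
  have hpow : Tendsto (fun n => (1 - β) ^ n) atTop (nhds 0) :=
    tendsto_pow_atTop_nhds_zero_of_abs_lt_one (by rw [abs_lt]; constructor <;> linarith)
  have h1 : Tendsto (fun n => m (N + n)) atTop (nhds y) := by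
    simp_rw [hstep]
    have := Tendsto.add (tendsto_const_nhds : Tendsto (fun _ : ℕ => y) atTop (nhds y)) (hpow.smul_const (m N - y))
    simpa using this
  have hmt : Tendsto m atTop (nhds y) := by
    rw [show (fun n => m (N + n)) = (fun n => m (n + N)) from funext fun n => by
      rw [Nat.add_comm]] at h1
    exact (tendsto_add_atTop_iff_nat N).mp h1
  have hJS : Tendsto (fun t => JSvec (m t) y) atTop (nhds 0) := by
    have := (JSvec_contAt y hypos).tendsto.comp hmt
    rwa [JSvec_self y hypos] at this
  refine hJS.congr' ?_
  filter_upwards [eventually_ge_atTop k] with t ht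
  rw [hy t ht]
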